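/- Let A ∈ W^{2,∞}(ℝ³,ℝ³) and define Φ̃_A as the two-parameter line-integral phase Φ̃_A(X,Z,r,s) := ∫₀¹ [A(ζ⁺_t) + A(ζ⁻_t)]·Z dt - ∫₀¹ [A(ζ⁺_t) - A(ζ⁻_t)]·((r-s)/2) dt with ζ^±_t := X + Z - tZ ± (s + t(r-s))/2. Then |∇_r Φ̃_A(X,Z,r,s) + ¼ ∇_r[(r-s)·DA(X)(r+s)]| ≤ C ‖D²A‖_∞ (|s|² + |r-s|² + |Z|²) for a universal constant C, uniformly in X. -/

import Mathlib

open Real RealInnerProductSpace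

noncomputable section

/-- The phase `Φ̃_A(X,Z,r,s)`. -/
def PhiTilde (A : EuclideanSpace ℝ (Fin 3) → EuclideanSpace ℝ (Fin 3))
    (X Z r s : EuclideanSpace ℝ (Fin 3)) : ℝ :=
  (∫ t in (0:ℝ)..1,
      ⟪A (X + Z - t • Z + (2:ℝ)⁻¹ • (s + t • (r - s)))
        + A (X + Z - t • Z - (2:ℝ)⁻¹ • (s + t • (r - s))), Z⟫)
  - ∫ t in (0:ℝ)..1,
      ⟪A (X + Z - t • Z + (2:ℝ)⁻¹ • (s + t • (r - s)))
        - A (X + Z - t • Z - (2:ℝ)⁻¹ • (s + t • (r - s))), (2:ℝ)⁻¹ • (r - s)⟫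

/-- The line-integral phase `Φ_{2A}(x,y) = ∫₀¹ 2A(y + t(x-y))·(x-y) dt`. -/
def PhiTwo (A : EuclideanSpace ℝ (Fin 3) → EuclideanSpace ℝ (Fin 3))
    (x y : EuclideanSpace ℝ (Fin 3)) : ℝ :=
  ∫ t in (0:ℝ)..1, ⟪(2:ℝ) • A (y + t • (x - y)), x - y⟫

set_option maxHeartbeats 2000000
set_option synthInstance.maxHeartbeats 400000
open MeasureTheory

section general
variable {E : Type*} [NormedAddCommGroup E] [NormedSpace ℝ E]

lemma lip_fderiv {A : E → E} (hA : ContDiff ℝ 2 A) {M : ℝ}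
    (hM : ∀ x, ‖fderiv ℝ (fderiv ℝ A) x‖ ≤ M) (x y : E) :
    ‖fderiv ℝ A y - fderiv ℝ A x‖ ≤ M * ‖y - x‖ := by
  have hd : ContDiff ℝ 1 (fderiv ℝ A) := ((contDiff_succ_iff_fderiv.mp (by exact_mod_cast hA : ContDiff ℝ (1+1 : ℕ) A)).2.2)
  refine (convex_univ (𝕜 := ℝ) (E := E)).norm_image_sub_le_of_norm_hasFDerivWithin_le
    (f := fderiv ℝ A) (f' := fun z => fderiv ℝ (fderiv ℝ A) z)
    (fun z _ => ((hd.differentiable (by norm_num) z).hasFDerivAt).hasFDerivWithinAt)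
    (fun z _ => hM z) (Set.mem_univ x) (Set.mem_univ y)

lemma taylor_fderiv {A : E → E} (hA : ContDiff ℝ 2 A) {M : ℝ}
    (hM : ∀ x, ‖fderiv ℝ (fderiv ℝ A) x‖ ≤ M) (x y : E) :
    ‖A y - A x - fderiv ℝ A x (y - x)‖ ≤ M * ‖y - x‖ ^ 2 := by
  set L := fderiv ℝ A x
  have hdiff : Differentiable ℝ A := hA.differentiable (by norm_num)
  have key : ∀ z ∈ Metric.closedBall x ‖y - x‖,
      HasFDerivWithinAt (fun w => A w - L w) (fderiv ℝ A z - L) (Metric.closedBall x ‖y - x‖) z :=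
    fun z _ => ((hdiff z).hasFDerivAt.sub (L.hasFDerivAt)).hasFDerivWithinAt
  have bound : ∀ z ∈ Metric.closedBall x ‖y - x‖, ‖fderiv ℝ A z - L‖ ≤ M * ‖y - x‖ := by
    intro z hz
    calc ‖fderiv ℝ A z - L‖ ≤ M * ‖z - x‖ := lip_fderiv hA hM x z
    _ ≤ M * ‖y - x‖ := by
        have hM0 : 0 ≤ M := le_trans (norm_nonneg _) (hM x)
        have := mem_closedBall_iff_norm.mp hz
        nlinarith [norm_nonneg (z - x)]
  have := (convex_closedBall x ‖y - x‖).norm_image_sub_le_of_norm_hasFDerivWithin_le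
    key bound (Metric.mem_closedBall_self (norm_nonneg _)) (mem_closedBall_iff_norm.mpr le_rfl)
  calc ‖A y - A x - L (y - x)‖ = ‖(A y - L y) - (A x - L x)‖ := by rw [map_sub]; abel_nf
  _ ≤ M * ‖y - x‖ * ‖y - x‖ := this
  _ = M * ‖y - x‖ ^ 2 := by ring

end general

abbrev E3 := EuclideanSpace ℝ (Fin 3)

def aPt (X Z s : E3) (t : ℝ) (ρ : E3) : E3 := X + Z - t • Z + (2:ℝ)⁻¹ • (s + t • (ρ - s))
def bPt (X Z s : E3) (t : ℝ) (ρ : E3) : E3 := X + Z - t • Z - (2:ℝ)⁻¹ • (s + t • (ρ - s))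

def Fint (A : E3 → E3) (X Z s : E3) (ρ : E3) (t : ℝ) : ℝ :=
  ⟪A (aPt X Z s t ρ) + A (bPt X Z s t ρ), Z⟫
    - ⟪A (aPt X Z s t ρ) - A (bPt X Z s t ρ), (2:ℝ)⁻¹ • (ρ - s)⟫

def Fder (A : E3 → E3) (X Z s : E3) (ρ : E3) (t : ℝ) : E3 →L[ℝ] ℝ :=
  (t/2) • ((innerSL ℝ Z).comp (fderiv ℝ A (aPt X Z s t ρ) - fderiv ℝ A (bPt X Z s t ρ)))
    - (t/2) • ((innerSL ℝ ((2:ℝ)⁻¹ • (ρ - s))).comp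
        (fderiv ℝ A (aPt X Z s t ρ) + fderiv ℝ A (bPt X Z s t ρ)))
    - (2:ℝ)⁻¹ • innerSL ℝ (A (aPt X Z s t ρ) - A (bPt X Z s t ρ))

lemma hasFDerivAt_Fint (A : E3 → E3) (hA : Differentiable ℝ A) (X Z r s : E3) (t : ℝ) :
    HasFDerivAt (fun ρ : E3 => Fint A X Z s ρ t) (Fder A X Z s r t) r := by
  have hin : HasFDerivAt (fun ρ : E3 => (2:ℝ)⁻¹ • (s + t • (ρ - s)))
      ((2:ℝ)⁻¹ • (t • ContinuousLinearMap.id ℝ E3)) r :=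
    ((((hasFDerivAt_id r).sub_const s).const_smul t).const_add s).const_smul (2:ℝ)⁻¹
  have ha : HasFDerivAt (fun ρ : E3 => aPt X Z s t ρ)
      ((2:ℝ)⁻¹ • (t • ContinuousLinearMap.id ℝ E3)) r := by
    simpa [aPt] using hin.const_add (X + Z - t • Z)
  have hb : HasFDerivAt (fun ρ : E3 => bPt X Z s t ρ)
      (-((2:ℝ)⁻¹ • (t • ContinuousLinearMap.id ℝ E3))) r := by
    simpa [bPt] using hin.const_sub (X + Z - t • Z)
  have hAa := (hA _).hasFDerivAt.comp r ha
  have hAb := (hA _).hasFDerivAt.comp r hb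
  have h1 := (hAa.add hAb).inner ℝ (hasFDerivAt_const Z r)
  have hg : HasFDerivAt (fun ρ : E3 => (2:ℝ)⁻¹ • (ρ - s))
      ((2:ℝ)⁻¹ • ContinuousLinearMap.id ℝ E3) r :=
    ((hasFDerivAt_id r).sub_const s).const_smul (2:ℝ)⁻¹
  have h2 := (hAa.sub hAb).inner ℝ hg
  have h := h1.sub h2
  refine h.congr_fderiv ?_
  ext v
  simp only [Fder, Fint, fderivInnerCLM_apply, ContinuousLinearMap.comp_apply,
    ContinuousLinearMap.prod_apply, ContinuousLinearMap.add_apply, ContinuousLinearMap.sub_apply,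
    ContinuousLinearMap.smul_apply, ContinuousLinearMap.coe_id', id_eq,
    ContinuousLinearMap.neg_apply, ContinuousLinearMap.zero_apply, inner_zero_right,
    inner_add_left, inner_sub_left, inner_add_right, inner_sub_right, real_inner_smul_left,
    real_inner_smul_right, innerSL_apply_apply, _root_.map_smul, map_neg, inner_neg_right, inner_neg_left,
    smul_eq_mul, add_zero, Pi.sub_apply, Pi.add_apply, Function.comp_apply, Function.comp]
  simp only [real_inner_comm Z, real_inner_comm r, real_inner_comm s]
  ring

lemma cont_aPt (X Z s ρ : E3) : Continuous fun t : ℝ => aPt X Z s t ρ := by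
  unfold aPt; fun_prop

lemma cont_bPt (X Z s ρ : E3) : Continuous fun t : ℝ => bPt X Z s t ρ := by
  unfold bPt; fun_prop

lemma PhiTilde_eq (A : E3 → E3) (hA : Continuous A) (X Z s ρ : E3) :
    PhiTilde A X Z ρ s = ∫ t in (0:ℝ)..1, Fint A X Z s ρ t := by
  have c1 : Continuous fun t : ℝ => X + Z - t • Z + (2:ℝ)⁻¹ • (s + t • (ρ - s)) := by fun_prop
  have c2 : Continuous fun t : ℝ => X + Z - t • Z - (2:ℝ)⁻¹ • (s + t • (ρ - s)) := by fun_prop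
  have h1 : Continuous fun t : ℝ =>
      (⟪A (X + Z - t • Z + (2:ℝ)⁻¹ • (s + t • (ρ - s)))
        + A (X + Z - t • Z - (2:ℝ)⁻¹ • (s + t • (ρ - s))), Z⟫ : ℝ) :=
    ((hA.comp c1).add (hA.comp c2)).inner continuous_const
  have h2 : Continuous fun t : ℝ =>
      (⟪A (X + Z - t • Z + (2:ℝ)⁻¹ • (s + t • (ρ - s)))
        - A (X + Z - t • Z - (2:ℝ)⁻¹ • (s + t • (ρ - s))), (2:ℝ)⁻¹ • (ρ - s)⟫ : ℝ) :=
    ((hA.comp c1).sub (hA.comp c2)).inner continuous_const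
  rw [PhiTilde, ← intervalIntegral.integral_sub (h1.intervalIntegrable 0 1)
    (h2.intervalIntegrable 0 1)]
  rfl

lemma Fder_apply (A : E3 → E3) (X Z s ρ : E3) (t : ℝ) (v : E3) :
    Fder A X Z s ρ t v =
      (t/2) * (⟪Z, fderiv ℝ A (aPt X Z s t ρ) v⟫ - ⟪Z, fderiv ℝ A (bPt X Z s t ρ) v⟫)
        - (t/4) * (⟪ρ - s, fderiv ℝ A (aPt X Z s t ρ) v⟫ + ⟪ρ - s, fderiv ℝ A (bPt X Z s t ρ) v⟫)
        - 2⁻¹ * ⟪A (aPt X Z s t ρ) - A (bPt X Z s t ρ), v⟫ := by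
  simp only [Fder, ContinuousLinearMap.sub_apply, ContinuousLinearMap.smul_apply,
    ContinuousLinearMap.comp_apply, ContinuousLinearMap.add_apply, innerSL_apply_apply,
    real_inner_smul_left, smul_eq_mul, inner_sub_right, inner_add_right]
  ring

lemma Fder_norm_le (A : E3 → E3) (X Z s : E3) {M₀ M₁ : ℝ} (hM₀ : ∀ x, ‖A x‖ ≤ M₀)
    (hM₁ : ∀ x, ‖fderiv ℝ A x‖ ≤ M₁) (ρ : E3) {t : ℝ} (ht : |t| ≤ 1) :
    ‖Fder A X Z s ρ t‖ ≤ M₁ * ‖Z‖ + M₁ * ‖ρ - s‖ + M₀ := by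
  have h0 : (0:ℝ) ≤ M₀ := le_trans (norm_nonneg _) (hM₀ 0)
  have h1 : (0:ℝ) ≤ M₁ := le_trans (norm_nonneg _) (hM₁ 0)
  refine ContinuousLinearMap.opNorm_le_bound _ (by positivity) fun v => ?_
  rw [Fder_apply, Real.norm_eq_abs]
  have bda : ‖fderiv ℝ A (aPt X Z s t ρ) v‖ ≤ M₁ * ‖v‖ :=
    le_trans ((fderiv ℝ A (aPt X Z s t ρ)).le_opNorm v)
      (mul_le_mul_of_nonneg_right (hM₁ _) (norm_nonneg _))
  have bdb : ‖fderiv ℝ A (bPt X Z s t ρ) v‖ ≤ M₁ * ‖v‖ :=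
    le_trans ((fderiv ℝ A (bPt X Z s t ρ)).le_opNorm v)
      (mul_le_mul_of_nonneg_right (hM₁ _) (norm_nonneg _))
  have b1 : |(⟪Z, fderiv ℝ A (aPt X Z s t ρ) v⟫ : ℝ)| ≤ ‖Z‖ * (M₁ * ‖v‖) :=
    le_trans (abs_real_inner_le_norm _ _) (mul_le_mul_of_nonneg_left bda (norm_nonneg _))
  have b2 : |(⟪Z, fderiv ℝ A (bPt X Z s t ρ) v⟫ : ℝ)| ≤ ‖Z‖ * (M₁ * ‖v‖) :=
    le_trans (abs_real_inner_le_norm _ _) (mul_le_mul_of_nonneg_left bdb (norm_nonneg _))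
  have b3 : |(⟪ρ - s, fderiv ℝ A (aPt X Z s t ρ) v⟫ : ℝ)| ≤ ‖ρ - s‖ * (M₁ * ‖v‖) :=
    le_trans (abs_real_inner_le_norm _ _) (mul_le_mul_of_nonneg_left bda (norm_nonneg _))
  have b4 : |(⟪ρ - s, fderiv ℝ A (bPt X Z s t ρ) v⟫ : ℝ)| ≤ ‖ρ - s‖ * (M₁ * ‖v‖) :=
    le_trans (abs_real_inner_le_norm _ _) (mul_le_mul_of_nonneg_left bdb (norm_nonneg _))
  have b5 : |(⟪A (aPt X Z s t ρ) - A (bPt X Z s t ρ), v⟫ : ℝ)| ≤ (M₀ + M₀) * ‖v‖ :=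
    le_trans (abs_real_inner_le_norm _ _) (mul_le_mul_of_nonneg_right
      (le_trans (norm_sub_le _ _) (add_le_add (hM₀ _) (hM₀ _))) (norm_nonneg _))
  have e1 : |(t/2) * ((⟪Z, fderiv ℝ A (aPt X Z s t ρ) v⟫ : ℝ)
      - ⟪Z, fderiv ℝ A (bPt X Z s t ρ) v⟫)| ≤ M₁ * ‖Z‖ * ‖v‖ := by
    rw [abs_mul, abs_div, abs_two]
    have := abs_sub (⟪Z, fderiv ℝ A (aPt X Z s t ρ) v⟫ : ℝ) ⟪Z, fderiv ℝ A (bPt X Z s t ρ) v⟫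
    nlinarith [abs_nonneg ((⟪Z, fderiv ℝ A (aPt X Z s t ρ) v⟫ : ℝ)
      - ⟪Z, fderiv ℝ A (bPt X Z s t ρ) v⟫), abs_nonneg t]
  have e2 : |(t/4) * ((⟪ρ - s, fderiv ℝ A (aPt X Z s t ρ) v⟫ : ℝ)
      + ⟪ρ - s, fderiv ℝ A (bPt X Z s t ρ) v⟫)| ≤ M₁ * ‖ρ - s‖ * ‖v‖ := by
    rw [abs_mul, abs_div]
    have h4 : |(4:ℝ)| = 4 := by norm_num
    rw [h4]
    have := abs_add_le (⟪ρ - s, fderiv ℝ A (aPt X Z s t ρ) v⟫ : ℝ)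
      ⟪ρ - s, fderiv ℝ A (bPt X Z s t ρ) v⟫
    nlinarith [abs_nonneg ((⟪ρ - s, fderiv ℝ A (aPt X Z s t ρ) v⟫ : ℝ)
      + ⟪ρ - s, fderiv ℝ A (bPt X Z s t ρ) v⟫), abs_nonneg t]
  have e3 : |(2:ℝ)⁻¹ * (⟪A (aPt X Z s t ρ) - A (bPt X Z s t ρ), v⟫ : ℝ)| ≤ M₀ * ‖v‖ := by
    rw [abs_mul]
    have h2 : |(2:ℝ)⁻¹| = 2⁻¹ := by norm_num
    rw [h2]
    linarith
  calc |_ - _ - _| ≤ |_ - _| + |(2:ℝ)⁻¹ * (⟪A (aPt X Z s t ρ) - A (bPt X Z s t ρ), v⟫ : ℝ)| :=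
        abs_sub _ _
    _ ≤ |(t/2) * ((⟪Z, fderiv ℝ A (aPt X Z s t ρ) v⟫ : ℝ)
          - ⟪Z, fderiv ℝ A (bPt X Z s t ρ) v⟫)|
        + |(t/4) * ((⟪ρ - s, fderiv ℝ A (aPt X Z s t ρ) v⟫ : ℝ)
          + ⟪ρ - s, fderiv ℝ A (bPt X Z s t ρ) v⟫)|
        + |(2:ℝ)⁻¹ * (⟪A (aPt X Z s t ρ) - A (bPt X Z s t ρ), v⟫ : ℝ)| :=
        add_le_add (abs_sub _ _) le_rfl
    _ ≤ (M₁ * ‖Z‖ + M₁ * ‖ρ - s‖ + M₀) * ‖v‖ := by nlinarith [e1, e2, e3]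

lemma cont_Fder (A : E3 → E3) (hA : ContDiff ℝ 2 A) (X Z s ρ : E3) :
    Continuous fun t : ℝ => Fder A X Z s ρ t := by
  have hc : Continuous A := hA.continuous
  have hfc : Continuous (fderiv ℝ A) := hA.continuous_fderiv (by norm_num)
  unfold Fder
  refine Continuous.sub (Continuous.sub ?_ ?_) ?_
  · exact (continuous_id.div_const 2).smul
      (Continuous.clm_comp continuous_const ((hfc.comp (cont_aPt X Z s ρ)).sub
        (hfc.comp (cont_bPt X Z s ρ))))
  · exact (continuous_id.div_const 2).smul
      (Continuous.clm_comp continuous_const ((hfc.comp (cont_aPt X Z s ρ)).add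
        (hfc.comp (cont_bPt X Z s ρ))))
  · exact (continuous_const : Continuous fun _ : ℝ => (2:ℝ)⁻¹).smul ((innerSL ℝ).continuous.comp
      ((hc.comp (cont_aPt X Z s ρ)).sub (hc.comp (cont_bPt X Z s ρ))))

lemma cont_Fint (A : E3 → E3) (hA : Continuous A) (X Z s ρ : E3) :
    Continuous fun t : ℝ => Fint A X Z s ρ t := by
  unfold Fint
  exact (((hA.comp (cont_aPt X Z s ρ)).add (hA.comp (cont_bPt X Z s ρ))).inner
    continuous_const).sub
    (((hA.comp (cont_aPt X Z s ρ)).sub (hA.comp (cont_bPt X Z s ρ))).inner continuous_const)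

lemma hasFDerivAt_phi (A : E3 → E3) (hA : ContDiff ℝ 2 A) {M₀ M₁ : ℝ}
    (hM₀ : ∀ x, ‖A x‖ ≤ M₀) (hM₁ : ∀ x, ‖fderiv ℝ A x‖ ≤ M₁) (X Z r s : E3) :
    HasFDerivAt (fun ρ => PhiTilde A X Z ρ s) (∫ t in (0:ℝ)..1, Fder A X Z s r t) r := by
  have hc : Continuous A := hA.continuous
  have key := intervalIntegral.hasFDerivAt_integral_of_dominated_of_fderiv_le
    (F := fun ρ t => Fint A X Z s ρ t) (F' := fun ρ t => Fder A X Z s ρ t) (x₀ := r)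
    (a := 0) (b := 1) (μ := by volume_tac)
    (bound := fun _ => M₁ * ‖Z‖ + M₁ * (‖r - s‖ + 1) + M₀) (Metric.ball_mem_nhds r one_pos)
    (Filter.Eventually.of_forall fun x => (cont_Fint A hc X Z s x).aestronglyMeasurable)
    ((cont_Fint A hc X Z s r).intervalIntegrable 0 1)
    (cont_Fder A hA X Z s r).aestronglyMeasurable.restrict
    ?_ (intervalIntegrable_const) ?_
  · have heq : (fun ρ => PhiTilde A X Z ρ s) = fun ρ => ∫ t in (0:ℝ)..1, Fint A X Z s ρ t :=
      funext fun ρ => PhiTilde_eq A hc X Z s ρ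
    rw [heq]
    exact key
  · refine Filter.Eventually.of_forall fun t ht x hx => ?_
    rw [Set.uIoc_of_le zero_le_one] at ht
    have habs : |t| ≤ 1 := by
      rw [abs_of_pos ht.1]; exact ht.2
    refine le_trans (Fder_norm_le A X Z s hM₀ hM₁ x habs) ?_
    have h1 : (0:ℝ) ≤ M₁ := le_trans (norm_nonneg _) (hM₁ 0)
    have : ‖x - s‖ ≤ ‖r - s‖ + 1 := by
      calc ‖x - s‖ = ‖(x - r) + (r - s)‖ := by abel_nf
        _ ≤ ‖x - r‖ + ‖r - s‖ := norm_add_le _ _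
        _ ≤ ‖r - s‖ + 1 := by
            have := mem_ball_iff_norm.mp hx
            linarith
    show M₁ * ‖Z‖ + M₁ * ‖x - s‖ + M₀ ≤ M₁ * ‖Z‖ + M₁ * (‖r - s‖ + 1) + M₀
    nlinarith
  · exact Filter.Eventually.of_forall fun t ht x _ =>
      hasFDerivAt_Fint A (hA.differentiable (by norm_num)) X Z x s t

lemma hasFDerivAt_quad (L : E3 →L[ℝ] E3) (r s : E3) :
    HasFDerivAt (fun ρ : E3 => (⟪ρ - s, L (ρ + s)⟫ : ℝ))
      (innerSL ℝ (L (r + s)) + (innerSL ℝ (r - s)).comp L) r := by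
  have h1 : HasFDerivAt (fun ρ : E3 => ρ - s) (ContinuousLinearMap.id ℝ E3) r :=
    (hasFDerivAt_id r).sub_const s
  have h2 : HasFDerivAt (fun ρ : E3 => L (ρ + s)) L r := by
    have h := L.hasFDerivAt.comp r ((hasFDerivAt_id r).add_const s)
    rw [ContinuousLinearMap.comp_id] at h
    exact h
  have h := h1.inner ℝ h2
  refine h.congr_fderiv ?_
  ext v
  simp only [fderivInnerCLM_apply, ContinuousLinearMap.comp_apply, ContinuousLinearMap.add_apply,
    ContinuousLinearMap.prod_apply, ContinuousLinearMap.coe_id', id_eq, innerSL_apply_apply]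
  rw [real_inner_comm (L (r + s)) v]
  ring

lemma integral_Fder_apply (A : E3 → E3) (hA : ContDiff ℝ 2 A) (X Z r s v : E3) :
    (∫ t in (0:ℝ)..1, Fder A X Z s r t) v = ∫ t in (0:ℝ)..1, Fder A X Z s r t v := by
  rw [intervalIntegral.integral_of_le zero_le_one, intervalIntegral.integral_of_le zero_le_one]
  exact ContinuousLinearMap.integral_apply ((cont_Fder A hA X Z s r).integrableOn_Ioc) v

lemma integral_lin (c d : ℝ) : ∫ t in (0:ℝ)..1, (c + t * d) = c + d / 2 := by
  rw [intervalIntegral.integral_add (intervalIntegrable_const)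
    ((continuous_mul_const d).intervalIntegrable 0 1),
    intervalIntegral.integral_const, intervalIntegral.integral_mul_const, integral_id]
  norm_num
  ring

lemma aPt_sub_X_norm (X Z s r : E3) {t : ℝ} (ht : t ∈ Set.Ioc (0:ℝ) 1) :
    ‖aPt X Z s t r - X‖ ≤ ‖Z‖ + ‖s‖ + ‖r - s‖ := by
  have h1 : aPt X Z s t r - X = (1 - t) • Z + (2:ℝ)⁻¹ • (s + t • (r - s)) := by
    rw [aPt, sub_smul, one_smul]; abel
  rw [h1]
  calc ‖(1 - t) • Z + (2:ℝ)⁻¹ • (s + t • (r - s))‖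
      ≤ ‖(1 - t) • Z‖ + ‖(2:ℝ)⁻¹ • (s + t • (r - s))‖ := norm_add_le _ _
    _ ≤ ‖Z‖ + (‖s‖ + ‖r - s‖) := by
        refine add_le_add ?_ ?_
        · rw [norm_smul, Real.norm_eq_abs]
          have : |1 - t| ≤ 1 := by rw [abs_le]; constructor <;> linarith [ht.1, ht.2]
          nlinarith [norm_nonneg Z]
        · rw [norm_smul]
          have : ‖s + t • (r - s)‖ ≤ ‖s‖ + ‖r - s‖ := by
            calc ‖s + t • (r - s)‖ ≤ ‖s‖ + ‖t • (r - s)‖ := norm_add_le _ _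
              _ ≤ ‖s‖ + ‖r - s‖ := by
                  rw [norm_smul, Real.norm_eq_abs]
                  have : |t| ≤ 1 := by rw [abs_le]; constructor <;> linarith [ht.1, ht.2]
                  nlinarith [norm_nonneg (r - s)]
          have h2 : ‖((2:ℝ)⁻¹ : ℝ)‖ = 2⁻¹ := by norm_num
          rw [h2]
          nlinarith [norm_nonneg (s + t • (r - s)), norm_nonneg s, norm_nonneg (r - s)]
    _ = ‖Z‖ + ‖s‖ + ‖r - s‖ := by ring

lemma bPt_sub_X_norm (X Z s r : E3) {t : ℝ} (ht : t ∈ Set.Ioc (0:ℝ) 1) :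
    ‖bPt X Z s t r - X‖ ≤ ‖Z‖ + ‖s‖ + ‖r - s‖ := by
  have h1 : bPt X Z s t r - X = (1 - t) • Z - (2:ℝ)⁻¹ • (s + t • (r - s)) := by
    rw [bPt, sub_smul, one_smul]; abel
  have h2 : ‖bPt X Z s t r - X‖ = ‖(1 - t) • Z + (2:ℝ)⁻¹ • (s + t • (r - s))‖ ∨ True := Or.inr trivial
  rw [h1, sub_eq_add_neg, ← smul_neg]
  have := aPt_sub_X_norm X Z s r ht
  calc ‖(1 - t) • Z + (2:ℝ)⁻¹ • (-(s + t • (r - s)))‖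
      ≤ ‖(1 - t) • Z‖ + ‖(2:ℝ)⁻¹ • (-(s + t • (r - s)))‖ := norm_add_le _ _
    _ ≤ ‖Z‖ + (‖s‖ + ‖r - s‖) := by
        refine add_le_add ?_ ?_
        · rw [norm_smul, Real.norm_eq_abs]
          have : |1 - t| ≤ 1 := by rw [abs_le]; constructor <;> linarith [ht.1, ht.2]
          nlinarith [norm_nonneg Z]
        · rw [norm_smul, norm_neg]
          have : ‖s + t • (r - s)‖ ≤ ‖s‖ + ‖r - s‖ := by
            calc ‖s + t • (r - s)‖ ≤ ‖s‖ + ‖t • (r - s)‖ := norm_add_le _ _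
              _ ≤ ‖s‖ + ‖r - s‖ := by
                  rw [norm_smul, Real.norm_eq_abs]
                  have : |t| ≤ 1 := by rw [abs_le]; constructor <;> linarith [ht.1, ht.2]
                  nlinarith [norm_nonneg (r - s)]
          have h2 : ‖((2:ℝ)⁻¹ : ℝ)‖ = 2⁻¹ := by norm_num
          rw [h2]
          nlinarith [norm_nonneg (s + t • (r - s)), norm_nonneg s, norm_nonneg (r - s)]
    _ = ‖Z‖ + ‖s‖ + ‖r - s‖ := by ring

lemma pointwise_est (A : E3 → E3) (hA : ContDiff ℝ 2 A) {M : ℝ}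
    (hM : ∀ x, ‖fderiv ℝ (fderiv ℝ A) x‖ ≤ M) (X Z r s v : E3) {t : ℝ}
    (ht : t ∈ Set.Ioc (0:ℝ) 1) :
    |Fder A X Z s r t v + ((t/2) * ⟪fderiv ℝ A X v, r - s⟫
        + 2⁻¹ * ⟪fderiv ℝ A X s + t • fderiv ℝ A X (r - s), v⟫)|
      ≤ 8 * M * (‖s‖^2 + ‖r - s‖^2 + ‖Z‖^2) * ‖v‖ := by
  set L := fderiv ℝ A X with hLdef
  set Da := fderiv ℝ A (aPt X Z s t r) with hDa
  set Db := fderiv ℝ A (bPt X Z s t r) with hDb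
  have hM0 : (0:ℝ) ≤ M := le_trans (by positivity) (hM X)
  -- the identity
  have hLab : (⟪L (aPt X Z s t r - X), v⟫ : ℝ) - ⟪L (bPt X Z s t r - X), v⟫
      = ⟪L s, v⟫ + t * ⟪L (r - s), v⟫ := by
    rw [← inner_sub_left, ← map_sub]
    have hdiff : aPt X Z s t r - X - (bPt X Z s t r - X) = s + t • (r - s) := by
      rw [aPt, bPt]
      have h2 : (2:ℝ)⁻¹ • (s + t • (r - s)) + (2:ℝ)⁻¹ • (s + t • (r - s)) = s + t • (r - s) := by
        rw [← add_smul]; norm_num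
      calc X + Z - t • Z + (2:ℝ)⁻¹ • (s + t • (r - s)) - X
            - (X + Z - t • Z - (2:ℝ)⁻¹ • (s + t • (r - s)) - X)
          = (2:ℝ)⁻¹ • (s + t • (r - s)) + (2:ℝ)⁻¹ • (s + t • (r - s)) := by abel
        _ = s + t • (r - s) := h2
    rw [hdiff, map_add, inner_add_left, ContinuousLinearMap.map_smul, real_inner_smul_left]
  have identity : Fder A X Z s r t v + ((t/2) * ⟪L v, r - s⟫
        + 2⁻¹ * ⟪L s + t • L (r - s), v⟫)
      = (t/2) * (⟪Z, Da v - L v⟫ - ⟪Z, Db v - L v⟫)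
        - (t/4) * (⟪r - s, Da v - L v⟫ + ⟪r - s, Db v - L v⟫)
        - 2⁻¹ * ⟪(A (aPt X Z s t r) - A X - L (aPt X Z s t r - X))
            - (A (bPt X Z s t r) - A X - L (bPt X Z s t r - X)), v⟫ := by
    rw [Fder_apply]
    simp only [inner_sub_right, inner_sub_left, inner_add_left, real_inner_smul_left, ← hDa, ← hDb]
    linear_combination (-(1/2) : ℝ) * hLab - (t/2) * real_inner_comm (L v) r + (t/2) * real_inner_comm (L v) s
  rw [identity]
  -- bounds
  obtain ⟨R, hR⟩ : ∃ R : ℝ, R = ‖Z‖ + ‖s‖ + ‖r - s‖ := ⟨_, rfl⟩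
  have hRa : ‖aPt X Z s t r - X‖ ≤ R := hR ▸ aPt_sub_X_norm X Z s r ht
  have hRb : ‖bPt X Z s t r - X‖ ≤ R := hR ▸ bPt_sub_X_norm X Z s r ht
  have hR0 : 0 ≤ R := by rw [hR]; positivity
  have lipa : ‖Da - L‖ ≤ M * R := by
    refine le_trans (lip_fderiv hA hM X (aPt X Z s t r)) ?_
    exact mul_le_mul_of_nonneg_left hRa hM0
  have lipb : ‖Db - L‖ ≤ M * R :=
    le_trans (lip_fderiv hA hM X (bPt X Z s t r)) (mul_le_mul_of_nonneg_left hRb hM0)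
  have taya : ‖A (aPt X Z s t r) - A X - L (aPt X Z s t r - X)‖ ≤ M * R ^ 2 := by
    refine le_trans (taylor_fderiv hA hM X (aPt X Z s t r)) ?_
    nlinarith [mul_nonneg hM0 (mul_nonneg (sub_nonneg.mpr hRa)
      (add_nonneg hR0 (norm_nonneg (aPt X Z s t r - X))))]
  have tayb : ‖A (bPt X Z s t r) - A X - L (bPt X Z s t r - X)‖ ≤ M * R ^ 2 := by
    refine le_trans (taylor_fderiv hA hM X (bPt X Z s t r)) ?_
    nlinarith [mul_nonneg hM0 (mul_nonneg (sub_nonneg.mpr hRb)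
      (add_nonneg hR0 (norm_nonneg (bPt X Z s t r - X))))]
  have sa : |(⟪Z, Da v - L v⟫ : ℝ)| ≤ ‖Z‖ * (M * R * ‖v‖) := by
    refine le_trans (abs_real_inner_le_norm _ _) (mul_le_mul_of_nonneg_left ?_ (norm_nonneg _))
    rw [← ContinuousLinearMap.sub_apply]
    exact le_trans ((Da - L).le_opNorm v) (mul_le_mul_of_nonneg_right lipa (norm_nonneg _))
  have sb : |(⟪Z, Db v - L v⟫ : ℝ)| ≤ ‖Z‖ * (M * R * ‖v‖) := by
    refine le_trans (abs_real_inner_le_norm _ _) (mul_le_mul_of_nonneg_left ?_ (norm_nonneg _))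
    rw [← ContinuousLinearMap.sub_apply]
    exact le_trans ((Db - L).le_opNorm v) (mul_le_mul_of_nonneg_right lipb (norm_nonneg _))
  have sc : |(⟪r - s, Da v - L v⟫ : ℝ)| ≤ ‖r - s‖ * (M * R * ‖v‖) := by
    refine le_trans (abs_real_inner_le_norm _ _) (mul_le_mul_of_nonneg_left ?_ (norm_nonneg _))
    rw [← ContinuousLinearMap.sub_apply]
    exact le_trans ((Da - L).le_opNorm v) (mul_le_mul_of_nonneg_right lipa (norm_nonneg _))
  have sd : |(⟪r - s, Db v - L v⟫ : ℝ)| ≤ ‖r - s‖ * (M * R * ‖v‖) := by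
    refine le_trans (abs_real_inner_le_norm _ _) (mul_le_mul_of_nonneg_left ?_ (norm_nonneg _))
    rw [← ContinuousLinearMap.sub_apply]
    exact le_trans ((Db - L).le_opNorm v) (mul_le_mul_of_nonneg_right lipb (norm_nonneg _))
  have se : |(⟪(A (aPt X Z s t r) - A X - L (aPt X Z s t r - X))
      - (A (bPt X Z s t r) - A X - L (bPt X Z s t r - X)), v⟫ : ℝ)|
      ≤ (M * R ^ 2 + M * R ^ 2) * ‖v‖ := by
    refine le_trans (abs_real_inner_le_norm _ _) (mul_le_mul_of_nonneg_right ?_ (norm_nonneg _))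
    exact le_trans (norm_sub_le _ _) (add_le_add taya tayb)
  have htabs : |t| ≤ 1 := by rw [abs_of_pos ht.1]; exact ht.2
  have tri : |(t/2) * (⟪Z, Da v - L v⟫ - ⟪Z, Db v - L v⟫)
        - (t/4) * (⟪r - s, Da v - L v⟫ + ⟪r - s, Db v - L v⟫)
        - 2⁻¹ * ⟪(A (aPt X Z s t r) - A X - L (aPt X Z s t r - X))
            - (A (bPt X Z s t r) - A X - L (bPt X Z s t r - X)), v⟫|
      ≤ |t|/2 * (|(⟪Z, Da v - L v⟫ : ℝ)| + |(⟪Z, Db v - L v⟫ : ℝ)|)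
        + |t|/4 * (|(⟪r - s, Da v - L v⟫ : ℝ)| + |(⟪r - s, Db v - L v⟫ : ℝ)|)
        + 2⁻¹ * |(⟪(A (aPt X Z s t r) - A X - L (aPt X Z s t r - X))
            - (A (bPt X Z s t r) - A X - L (bPt X Z s t r - X)), v⟫ : ℝ)| := by
    calc _ ≤ |(t/2) * (⟪Z, Da v - L v⟫ - ⟪Z, Db v - L v⟫)
          - (t/4) * (⟪r - s, Da v - L v⟫ + ⟪r - s, Db v - L v⟫)|
        + |2⁻¹ * (⟪(A (aPt X Z s t r) - A X - L (aPt X Z s t r - X))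
            - (A (bPt X Z s t r) - A X - L (bPt X Z s t r - X)), v⟫ : ℝ)| := abs_sub _ _
      _ ≤ |(t/2) * (⟪Z, Da v - L v⟫ - ⟪Z, Db v - L v⟫)|
        + |(t/4) * (⟪r - s, Da v - L v⟫ + ⟪r - s, Db v - L v⟫)|
        + |2⁻¹ * (⟪(A (aPt X Z s t r) - A X - L (aPt X Z s t r - X))
            - (A (bPt X Z s t r) - A X - L (bPt X Z s t r - X)), v⟫ : ℝ)| :=
          add_le_add (abs_sub _ _) le_rfl
      _ ≤ _ := by
          rw [abs_mul, abs_mul, abs_mul, abs_div, abs_div]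
          refine add_le_add (add_le_add ?_ ?_) ?_
          · rw [abs_two]
            exact mul_le_mul_of_nonneg_left (abs_sub _ _) (by positivity)
          · have h4 : |(4:ℝ)| = 4 := by norm_num
            rw [h4]
            exact mul_le_mul_of_nonneg_left (abs_add_le _ _) (by positivity)
          · have h2 : |(2:ℝ)⁻¹| = 2⁻¹ := by norm_num
            rw [h2]
  refine le_trans tri ?_
  have hZR : ‖Z‖ ≤ R := by rw [hR]; linarith [norm_nonneg s, norm_nonneg (r - s)]
  have hrsR : ‖r - s‖ ≤ R := by rw [hR]; linarith [norm_nonneg s, norm_nonneg Z]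
  have hR2 : R ^ 2 ≤ 3 * (‖s‖^2 + ‖r - s‖^2 + ‖Z‖^2) := by
    rw [hR]
    nlinarith [sq_nonneg (‖Z‖ - ‖s‖), sq_nonneg (‖Z‖ - ‖r - s‖), sq_nonneg (‖s‖ - ‖r - s‖)]
  have step1 : |t|/2 * (|(⟪Z, Da v - L v⟫ : ℝ)| + |(⟪Z, Db v - L v⟫ : ℝ)|)
      ≤ ‖Z‖ * (M * R * ‖v‖) := by
    have hnn : (0:ℝ) ≤ |(⟪Z, Da v - L v⟫ : ℝ)| + |(⟪Z, Db v - L v⟫ : ℝ)| := by positivity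
    have h' : |t|/2 * (|(⟪Z, Da v - L v⟫ : ℝ)| + |(⟪Z, Db v - L v⟫ : ℝ)|)
        ≤ 1/2 * (|(⟪Z, Da v - L v⟫ : ℝ)| + |(⟪Z, Db v - L v⟫ : ℝ)|) :=
      mul_le_mul_of_nonneg_right (by linarith) hnn
    linarith [sa, sb]
  have step2 : |t|/4 * (|(⟪r - s, Da v - L v⟫ : ℝ)| + |(⟪r - s, Db v - L v⟫ : ℝ)|)
      ≤ 2⁻¹ * (‖r - s‖ * (M * R * ‖v‖)) := by
    have hnn : (0:ℝ) ≤ |(⟪r - s, Da v - L v⟫ : ℝ)| + |(⟪r - s, Db v - L v⟫ : ℝ)| := by positivity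
    have h' : |t|/4 * (|(⟪r - s, Da v - L v⟫ : ℝ)| + |(⟪r - s, Db v - L v⟫ : ℝ)|)
        ≤ 1/4 * (|(⟪r - s, Da v - L v⟫ : ℝ)| + |(⟪r - s, Db v - L v⟫ : ℝ)|) :=
      mul_le_mul_of_nonneg_right (by linarith) hnn
    linarith [sc, sd]
  have step3 : 2⁻¹ * |(⟪(A (aPt X Z s t r) - A X - L (aPt X Z s t r - X))
      - (A (bPt X Z s t r) - A X - L (bPt X Z s t r - X)), v⟫ : ℝ)| ≤ M * R ^ 2 * ‖v‖ := by
    linarith [se]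
  have hfin : ‖Z‖ * (M * R * ‖v‖) + 2⁻¹ * (‖r - s‖ * (M * R * ‖v‖)) + M * R ^ 2 * ‖v‖
      ≤ 8 * M * (‖s‖^2 + ‖r - s‖^2 + ‖Z‖^2) * ‖v‖ := by
    have hMv : 0 ≤ M * ‖v‖ := by positivity
    have h1 : ‖Z‖ * (M * R * ‖v‖) ≤ M * R ^ 2 * ‖v‖ := by
      nlinarith [mul_nonneg (sub_nonneg.mpr hZR)
        (mul_nonneg (mul_nonneg hM0 hR0) (norm_nonneg v))]
    have h2' : ‖r - s‖ * (M * R * ‖v‖) ≤ M * R ^ 2 * ‖v‖ := by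
      nlinarith [mul_nonneg (sub_nonneg.mpr hrsR)
        (mul_nonneg (mul_nonneg hM0 hR0) (norm_nonneg v))]
    have h2 : 2⁻¹ * (‖r - s‖ * (M * R * ‖v‖)) ≤ 2⁻¹ * (M * R ^ 2 * ‖v‖) := by linarith
    have h3 : M * R ^ 2 * ‖v‖ ≤ M * (3 * (‖s‖^2 + ‖r - s‖^2 + ‖Z‖^2)) * ‖v‖ := by
      nlinarith [mul_nonneg (mul_nonneg hM0 (sub_nonneg.mpr hR2)) (norm_nonneg v)]
    have hpos : 0 ≤ M * (‖s‖^2 + ‖r - s‖^2 + ‖Z‖^2) * ‖v‖ :=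
      mul_nonneg (mul_nonneg hM0 (by positivity)) (norm_nonneg v)
    linarith [h1, h2, h3]
  linarith [step1, step2, step3, hfin]


/-- For `A ∈ W^{2,∞}(ℝ³,ℝ³)`, uniformly in `X`:
`|∇_r Φ̃_A(X,Z,r,s) + ¼ ∇_r[(r-s)·DA(X)(r+s)]| ≤ C ‖D²A‖_∞ (|s|² + |r-s|² + |Z|²)`. -/
theorem stmt_10 :
    ∃ C : ℝ, 0 < C ∧
      ∀ (A : EuclideanSpace ℝ (Fin 3) → EuclideanSpace ℝ (Fin 3)),
        ContDiff ℝ 2 A →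
        ∀ M : ℝ, (∀ x, ‖fderiv ℝ (fderiv ℝ A) x‖ ≤ M) →
        (∃ M₀, ∀ x, ‖A x‖ ≤ M₀) → (∃ M₁, ∀ x, ‖fderiv ℝ A x‖ ≤ M₁) →
        ∀ X Z r s : EuclideanSpace ℝ (Fin 3),
          ‖fderiv ℝ (fun ρ => PhiTilde A X Z ρ s) r
              + (4:ℝ)⁻¹ • fderiv ℝ (fun ρ => ⟪ρ - s, fderiv ℝ A X (ρ + s)⟫) r‖
            ≤ C * M * (‖s‖ ^ 2 + ‖r - s‖ ^ 2 + ‖Z‖ ^ 2) := by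
  refine ⟨8, by norm_num, ?_⟩
  rintro A hA M hM ⟨M₀, hM₀⟩ ⟨M₁, hM₁⟩ X Z r s
  have hM0 : (0:ℝ) ≤ M := le_trans (by positivity) (hM X)
  have hSig : (0:ℝ) ≤ ‖s‖ ^ 2 + ‖r - s‖ ^ 2 + ‖Z‖ ^ 2 := by positivity
  have hfd : fderiv ℝ (fun ρ => PhiTilde A X Z ρ s) r = ∫ t in (0:ℝ)..1, Fder A X Z s r t :=
    (hasFDerivAt_phi A hA hM₀ hM₁ X Z r s).fderiv
  have hfdQ : fderiv ℝ (fun ρ : E3 => (⟪ρ - s, fderiv ℝ A X (ρ + s)⟫ : ℝ)) r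
      = innerSL ℝ (fderiv ℝ A X (r + s)) + (innerSL ℝ (r - s)).comp (fderiv ℝ A X) :=
    (hasFDerivAt_quad (fderiv ℝ A X) r s).fderiv
  rw [hfd, hfdQ]
  refine ContinuousLinearMap.opNorm_le_bound _
    (mul_nonneg (mul_nonneg (by norm_num) hM0) hSig) fun v => ?_
  rw [ContinuousLinearMap.add_apply, ContinuousLinearMap.smul_apply,
    integral_Fder_apply A hA X Z r s v]
  set L := fderiv ℝ A X with hL
  have hint1 : IntervalIntegrable (fun t => Fder A X Z s r t v) MeasureTheory.volume 0 1 :=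
    ((ContinuousLinearMap.apply ℝ ℝ v).continuous.comp (cont_Fder A hA X Z s r)).intervalIntegrable
      0 1
  have hint2 : IntervalIntegrable
      (fun t : ℝ => (t/2) * ⟪L v, r - s⟫ + 2⁻¹ * ⟪L s + t • L (r - s), v⟫)
      MeasureTheory.volume 0 1 := by
    apply Continuous.intervalIntegrable
    exact ((continuous_id'.div_const 2).mul continuous_const).add
      (continuous_const.mul ((continuous_const.add
        (continuous_id'.smul continuous_const)).inner continuous_const))
  have key : (∫ t in (0:ℝ)..1, Fder A X Z s r t v)
      + (4:ℝ)⁻¹ • ((innerSL ℝ (L (r + s)) + (innerSL ℝ (r - s)).comp L) v)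
      = ∫ t in (0:ℝ)..1, (Fder A X Z s r t v
          + ((t/2) * ⟪L v, r - s⟫ + 2⁻¹ * ⟪L s + t • L (r - s), v⟫)) := by
    rw [intervalIntegral.integral_add hint1 hint2]
    congr 1
    have hfun : (fun t : ℝ => (t/2) * ⟪L v, r - s⟫ + 2⁻¹ * ⟪L s + t • L (r - s), v⟫)
        = fun t : ℝ => (2⁻¹ * ⟪L s, v⟫) + t * (((⟪L v, r - s⟫ : ℝ) + ⟪L (r - s), v⟫)/2) := by
      funext t
      simp only [inner_add_left, real_inner_smul_left]
      ring
    rw [hfun, integral_lin]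
    simp only [ContinuousLinearMap.add_apply, ContinuousLinearMap.comp_apply, innerSL_apply_apply,
      smul_eq_mul]
    have h1 : L (r + s) = L r + L s := map_add _ _ _
    have h2 : L (r - s) = L r - L s := map_sub _ _ _
    rw [h1, h2]
    simp only [inner_add_left, inner_sub_left]
    linear_combination ((1/4 : ℝ)) * real_inner_comm (L v) (r - s)
      - (4⁻¹ : ℝ) * (inner_sub_left (𝕜 := ℝ) r s (L v) : (⟪r - s, L v⟫ : ℝ) = ⟪r, L v⟫ - ⟪s, L v⟫)
  rw [key]
  have bound := fun (t : ℝ) (ht : t ∈ Set.uIoc (0:ℝ) 1) => by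
    rw [Set.uIoc_of_le zero_le_one] at ht
    exact pointwise_est A hA hM X Z r s v ht
  calc ‖∫ t in (0:ℝ)..1, (Fder A X Z s r t v
        + ((t/2) * ⟪L v, r - s⟫ + 2⁻¹ * ⟪L s + t • L (r - s), v⟫))‖
      ≤ (8 * M * (‖s‖ ^ 2 + ‖r - s‖ ^ 2 + ‖Z‖ ^ 2) * ‖v‖) * |1 - 0| :=
        intervalIntegral.norm_integral_le_of_norm_le_const fun t ht => by
          rw [Real.norm_eq_abs]; exact bound t ht
    _ = 8 * M * (‖s‖ ^ 2 + ‖r - s‖ ^ 2 + ‖Z‖ ^ 2) * ‖v‖ := by norm_num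

end
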